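/- Let μ₁ and μ₂ be Borel probability measures on ℝⁿ with finite first moments, with μ₁ ⪯ μ₂ in convex order, with barycenter zero (∫ x dμ₁(x) = 0), and such that μ₂(H) < 1 for every affine hyperplane H ⊂ ℝⁿ. Let U₀, …, U_N be pairwise disjoint Borel sets with μ₁(U₀ ∪ … ∪ U_N) = 1, p_k := μ₁(U_k) > 0 for each k, and x_k := p_k⁻¹ ∫_{U_k} x dμ₁(x). Define F : (ℝ × ℝⁿ)^N → (ℝ × ℝⁿ)^N by F((a₁,b₁),…,(a_N,b_N))_k := ∫_{ℝⁿ} (1, y) · p_k exp(a_k + ⟨b_k, y⟩) / (p₀ + Σ_{l=1}^N p_l exp(a_l + ⟨b_l, y⟩)) dμ₂(y). Then the point ((p₁, p₁x₁), …, (p_N, p_N x_N)) belongs to the closure of the range of F; equivalently, there is a sequence (a^{(m)}, b^{(m)}) with F(a^{(m)}, b^{(m)}) → ((p₁, p₁x₁), …, (p_N, p_N x_N)) as m → ∞. -/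

import Mathlib

open MeasureTheory
open scoped RealInnerProductSpace

/-- Extension of a tuple `((a₁,b₁),…,(a_N,b_N))` by `(a₀,b₀) = (0,0)`. -/
noncomputable def extPair {n N : ℕ}
    (ab : Fin N → ℝ × EuclideanSpace ℝ (Fin n)) :
    Fin (N + 1) → ℝ × EuclideanSpace ℝ (Fin n) :=
  Fin.cases (0, 0) ab

/-- Gibbs-type weight `p_k exp(a_k + ⟨b_k, y⟩) / Σ_l p_l exp(a_l + ⟨b_l, y⟩)`,
with the convention `(a₀,b₀) = (0,0)`. -/
noncomputable def gibbsWeight {n N : ℕ} (p : Fin (N + 1) → ℝ)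
    (ab : Fin N → ℝ × EuclideanSpace ℝ (Fin n)) (k : Fin (N + 1))
    (y : EuclideanSpace ℝ (Fin n)) : ℝ :=
  p k * Real.exp ((extPair ab k).1 + ⟪(extPair ab k).2, y⟫) /
    ∑ l : Fin (N + 1), p l * Real.exp ((extPair ab l).1 + ⟪(extPair ab l).2, y⟫)

namespace MainLemmaAux

variable {n N : ℕ}

abbrev E (n : ℕ) := EuclideanSpace ℝ (Fin n)
abbrev D (n N : ℕ) := Fin N → ℝ × E n

/-- The partition function. -/
noncomputable def S (p : Fin (N+1) → ℝ) (z : D n N) (y : E n) : ℝ :=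
  ∑ l : Fin (N + 1), p l * Real.exp ((extPair z l).1 + ⟪(extPair z l).2, y⟫)

@[simp] lemma extPair_zero (z : D n N) : extPair z 0 = (0, 0) := rfl
@[simp] lemma extPair_succ (z : D n N) (k : Fin N) : extPair z k.succ = z k := by
  simp [extPair]

variable {p : Fin (N+1) → ℝ}

lemma S_pos (hp : ∀ l, 0 < p l) (z : D n N) (y : E n) : 0 < S p z y := by
  refine Finset.sum_pos (fun l _ => mul_pos (hp l) (Real.exp_pos _)) ⟨0, Finset.mem_univ _⟩

lemma S_eq (p : Fin (N+1) → ℝ) (z : D n N) (y : E n) :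
    S p z y = p 0 + ∑ k : Fin N, p k.succ * Real.exp ((z k).1 + ⟪(z k).2, y⟫) := by
  rw [S, Fin.sum_univ_succ]
  simp

lemma gibbs_eq (z : D n N) (k : Fin (N+1)) (y : E n) :
    gibbsWeight p z k y
      = p k * Real.exp ((extPair z k).1 + ⟪(extPair z k).2, y⟫) / S p z y := rfl

lemma gibbs_nonneg (hp : ∀ l, 0 < p l) (z : D n N) (k : Fin (N+1)) (y : E n) :
    0 ≤ gibbsWeight p z k y :=
  div_nonneg (mul_nonneg (hp k).le (Real.exp_pos _).le) (S_pos hp z y).le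

lemma gibbs_sum (hp : ∀ l, 0 < p l) (z : D n N) (y : E n) :
    ∑ k : Fin (N+1), gibbsWeight p z k y = 1 := by
  simp only [gibbs_eq]
  rw [← Finset.sum_div]
  exact div_self (S_pos hp z y).ne'

lemma gibbs_le_one (hp : ∀ l, 0 < p l) (z : D n N) (k : Fin (N+1)) (y : E n) :
    gibbsWeight p z k y ≤ 1 := by
  have := gibbs_sum hp z y
  calc gibbsWeight p z k y ≤ ∑ l : Fin (N+1), gibbsWeight p z l y :=
        Finset.single_le_sum (fun l _ => gibbs_nonneg hp z l y) (Finset.mem_univ k)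
    _ = 1 := this

lemma gibbs_succ_sum_le_one (hp : ∀ l, 0 < p l) (z : D n N) (y : E n) :
    ∑ k : Fin N, gibbsWeight p z k.succ y ≤ 1 := by
  have h := gibbs_sum hp z y
  rw [Fin.sum_univ_succ] at h
  have h0 := gibbs_nonneg hp z 0 y
  linarith

lemma continuous_S (z : D n N) : Continuous fun y : E n => S p z y := by
  unfold S
  exact continuous_finset_sum _ fun l _ => by
    exact (continuous_const.mul ((Real.continuous_exp.comp
      (continuous_const.add (continuous_const.inner continuous_id)))))

lemma continuous_gibbs (hp : ∀ l, 0 < p l) (z : D n N) (k : Fin (N+1)) :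
    Continuous fun y : E n => gibbsWeight p z k y := by
  unfold gibbsWeight
  refine Continuous.div ?_ (continuous_S z) (fun y => (S_pos hp z y).ne')
  exact continuous_const.mul (Real.continuous_exp.comp
    (continuous_const.add (continuous_const.inner continuous_id)))


section Holder

lemma holder_two {m : ℕ} (t s : ℝ) (ht : 0 ≤ t) (hs : 0 ≤ s) (hts : t + s = 1)
    (A B : Fin (m+1) → ℝ) (hA : ∀ l, 0 < A l) (hB : ∀ l, 0 < B l) :
    ∑ l, (A l) ^ t * (B l) ^ s ≤ (∑ l, A l) ^ t * (∑ l, B l) ^ s := by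
  set SA := ∑ l, A l with hSA
  set SB := ∑ l, B l with hSB
  have hSApos : 0 < SA := Finset.sum_pos (fun l _ => hA l) ⟨0, Finset.mem_univ _⟩
  have hSBpos : 0 < SB := Finset.sum_pos (fun l _ => hB l) ⟨0, Finset.mem_univ _⟩
  have key : ∀ l : Fin (m+1),
      (A l) ^ t * (B l) ^ s ≤ SA ^ t * SB ^ s * (t * (A l / SA) + s * (B l / SB)) := by
    intro l
    have h1 : (A l / SA) ^ t * (B l / SB) ^ s ≤ t * (A l / SA) + s * (B l / SB) :=
      Real.geom_mean_le_arith_mean2_weighted ht hs (div_nonneg (hA l).le hSApos.le)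
        (div_nonneg (hB l).le hSBpos.le) hts
    have h2 : (A l / SA) ^ t = (A l) ^ t / SA ^ t := Real.div_rpow (hA l).le hSApos.le t
    have h3 : (B l / SB) ^ s = (B l) ^ s / SB ^ s := Real.div_rpow (hB l).le hSBpos.le s
    have hSAt : (0:ℝ) < SA ^ t := Real.rpow_pos_of_pos hSApos t
    have hSBs : (0:ℝ) < SB ^ s := Real.rpow_pos_of_pos hSBpos s
    calc (A l) ^ t * (B l) ^ s
        = SA ^ t * SB ^ s * ((A l / SA) ^ t * (B l / SB) ^ s) := by
          rw [h2, h3]; field_simp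
      _ ≤ SA ^ t * SB ^ s * (t * (A l / SA) + s * (B l / SB)) := by
          exact mul_le_mul_of_nonneg_left h1 (mul_nonneg hSAt.le hSBs.le)
  calc ∑ l, (A l) ^ t * (B l) ^ s
      ≤ ∑ l, SA ^ t * SB ^ s * (t * (A l / SA) + s * (B l / SB)) :=
        Finset.sum_le_sum fun l _ => key l
    _ = SA ^ t * SB ^ s * (t * (SA / SA) + s * (SB / SB)) := by
        rw [← Finset.mul_sum]
        congr 1
        rw [Finset.sum_add_distrib, ← Finset.mul_sum, ← Finset.mul_sum,
          ← Finset.sum_div, ← Finset.sum_div]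
    _ = SA ^ t * SB ^ s := by
        rw [div_self hSApos.ne', div_self hSBpos.ne', mul_one, mul_one, hts, mul_one]
end Holder

set_option maxHeartbeats 1000000

lemma convexOn_logS (hp : ∀ l, 0 < p l) (z : D n N) :
    ConvexOn ℝ Set.univ (fun y => Real.log (S p z y)) := by
  refine ⟨convex_univ, fun y₁ _ y₂ _ t s ht hs hts => ?_⟩
  simp only [smul_eq_mul]
  have hterm : ∀ l : Fin (N+1),
      p l * Real.exp ((extPair z l).1 + ⟪(extPair z l).2, t • y₁ + s • y₂⟫)
        = (p l * Real.exp ((extPair z l).1 + ⟪(extPair z l).2, y₁⟫)) ^ t *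
          (p l * Real.exp ((extPair z l).1 + ⟪(extPair z l).2, y₂⟫)) ^ s := by
    intro l
    set a := (extPair z l).1
    set u := ⟪(extPair z l).2, y₁⟫
    set v := ⟪(extPair z l).2, y₂⟫
    have hin : ⟪(extPair z l).2, t • y₁ + s • y₂⟫ = t * u + s * v := by
      rw [inner_add_right, real_inner_smul_right, real_inner_smul_right]
    have hp' : p l = (p l) ^ t * (p l) ^ s := by
      rw [← Real.rpow_add (hp l), hts, Real.rpow_one]
    have hexp : Real.exp (a + (t * u + s * v))
        = (Real.exp (a + u)) ^ t * (Real.exp (a + v)) ^ s := by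
      rw [Real.rpow_def_of_pos (Real.exp_pos _), Real.rpow_def_of_pos (Real.exp_pos _),
        Real.log_exp, Real.log_exp, ← Real.exp_add]
      congr 1
      have : a = (t + s) * a := by rw [hts, one_mul]
      nlinarith [this]
    rw [hin, hexp]
    nth_rewrite 1 [hp']
    rw [Real.mul_rpow (hp l).le (Real.exp_pos _).le,
      Real.mul_rpow (hp l).le (Real.exp_pos _).le]
    ring
  have hS : S p z (t • y₁ + s • y₂)
      ≤ (S p z y₁) ^ t * (S p z y₂) ^ s := by
    unfold S
    calc ∑ l : Fin (N+1), p l * Real.exp ((extPair z l).1 + ⟪(extPair z l).2, t • y₁ + s • y₂⟫)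
        = ∑ l : Fin (N+1),
            (p l * Real.exp ((extPair z l).1 + ⟪(extPair z l).2, y₁⟫)) ^ t *
            (p l * Real.exp ((extPair z l).1 + ⟪(extPair z l).2, y₂⟫)) ^ s :=
          Finset.sum_congr rfl fun l _ => hterm l
      _ ≤ _ := holder_two t s ht hs hts _ _
            (fun l => mul_pos (hp l) (Real.exp_pos _))
            (fun l => mul_pos (hp l) (Real.exp_pos _))
  calc Real.log (S p z (t • y₁ + s • y₂))
      ≤ Real.log ((S p z y₁) ^ t * (S p z y₂) ^ s) := by
        refine Real.log_le_log (S_pos hp z _) hS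
    _ = t * Real.log (S p z y₁) + s * Real.log (S p z y₂) := by
        rw [Real.log_mul (Real.rpow_pos_of_pos (S_pos hp z y₁) t).ne'
          (Real.rpow_pos_of_pos (S_pos hp z y₂) s).ne',
          Real.log_rpow (S_pos hp z y₁), Real.log_rpow (S_pos hp z y₂)]

lemma logS_bound (hp : ∀ l, 0 < p l) (z : D n N) :
    ∃ C : ℝ, 0 ≤ C ∧ ∀ y : E n, |Real.log (S p z y)| ≤ C + C * ‖y‖ := by
  set A := ∑ l : Fin (N+1), |(extPair z l).1| with hA
  set B := ∑ l : Fin (N+1), ‖(extPair z l).2‖ with hB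
  have hA0 : 0 ≤ A := Finset.sum_nonneg fun l _ => abs_nonneg _
  have hB0 : 0 ≤ B := Finset.sum_nonneg fun l _ => norm_nonneg _
  set P := ∑ l : Fin (N+1), p l with hP
  have hPpos : 0 < P := Finset.sum_pos (fun l _ => hp l) ⟨0, Finset.mem_univ _⟩
  refine ⟨|Real.log (p 0)| + |Real.log P| + A + B,
    by
      have h1 := abs_nonneg (Real.log (p 0)); have h2 := abs_nonneg (Real.log P)
      linarith, fun y => ?_⟩
  have hupper : Real.log (S p z y) ≤ Real.log P + A + B * ‖y‖ := by
    have hSle : S p z y ≤ P * Real.exp (A + B * ‖y‖) := by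
      rw [hP, Finset.sum_mul]
      refine Finset.sum_le_sum fun l _ => ?_
      refine mul_le_mul_of_nonneg_left (Real.exp_le_exp.2 ?_) (hp l).le
      have h1 : (extPair z l).1 ≤ A :=
        le_trans (le_abs_self _)
          (Finset.single_le_sum (fun l _ => abs_nonneg ((extPair z l).1)) (Finset.mem_univ l))
      have h2 : ⟪(extPair z l).2, y⟫ ≤ B * ‖y‖ := by
        refine le_trans (real_inner_le_norm _ _) ?_
        exact mul_le_mul_of_nonneg_right
          (Finset.single_le_sum (fun l _ => norm_nonneg ((extPair z l).2)) (Finset.mem_univ l))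
          (norm_nonneg y)
      linarith
    calc Real.log (S p z y) ≤ Real.log (P * Real.exp (A + B * ‖y‖)) :=
          Real.log_le_log (S_pos hp z y) hSle
      _ = Real.log P + (A + B * ‖y‖) := by rw [Real.log_mul hPpos.ne' (Real.exp_pos _).ne', Real.log_exp]
      _ = Real.log P + A + B * ‖y‖ := by ring
  have hlower : Real.log (p 0) ≤ Real.log (S p z y) := by
    refine Real.log_le_log (hp 0) ?_
    have h0 : p 0 * Real.exp ((extPair z 0).1 + ⟪(extPair z 0).2, y⟫) ≤ S p z y :=
      Finset.single_le_sum
        (f := fun l => p l * Real.exp ((extPair z l).1 + ⟪(extPair z l).2, y⟫))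
        (fun l _ => mul_nonneg (hp l).le (Real.exp_pos _).le) (Finset.mem_univ 0)
    simpa using h0
  set C := |Real.log (p 0)| + |Real.log P| + A + B with hC
  have hr0 : (0:ℝ) ≤ ‖y‖ := norm_nonneg y
  have hC0' : 0 ≤ C := by
    have h1 := abs_nonneg (Real.log (p 0)); have h2 := abs_nonneg (Real.log P); linarith
  have hCr : 0 ≤ C * ‖y‖ := mul_nonneg hC0' hr0
  have hBC : B * ‖y‖ ≤ C * ‖y‖ := by
    refine mul_le_mul_of_nonneg_right ?_ hr0
    have := abs_nonneg (Real.log (p 0)); have := abs_nonneg (Real.log P); linarith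
  rw [abs_le]
  constructor
  · have h1 : -(|Real.log (p 0)|) ≤ Real.log (p 0) := neg_abs_le _
    have h2 : |Real.log P| + A + B ≥ 0 := by
      have := abs_nonneg (Real.log P); linarith
    linarith
  · have h1 : Real.log P ≤ |Real.log P| := le_abs_self _
    have h2 : |Real.log (p 0)| ≥ 0 := abs_nonneg _
    linarith

lemma integrable_logS (hp : ∀ l, 0 < p l) (z : D n N)
    (μ : Measure (E n)) [IsProbabilityMeasure μ]
    (hmom : Integrable (fun x : E n => ‖x‖) μ) :
    Integrable (fun y => Real.log (S p z y)) μ := by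
  obtain ⟨C, hC0, hC⟩ := logS_bound hp z
  have hmeas : AEStronglyMeasurable (fun y => Real.log (S p z y)) μ :=
    ((continuous_S z).log fun y => (S_pos hp z y).ne').aestronglyMeasurable
  refine Integrable.mono' ((integrable_const C).add (hmom.const_mul C)) hmeas ?_
  filter_upwards with y
  simpa [Real.norm_eq_abs] using hC y

/-- The continuous linear functional `v ↦ (v k).1 + ⟪y, (v k).2⟫`. -/
noncomputable def T (k : Fin N) (y : E n) : D n N →L[ℝ] ℝ :=
  ((ContinuousLinearMap.fst ℝ ℝ (E n)).comp (ContinuousLinearMap.proj k)) +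
  ((innerSL ℝ y).comp ((ContinuousLinearMap.snd ℝ ℝ (E n)).comp (ContinuousLinearMap.proj k)))

@[simp] lemma T_apply (k : Fin N) (y : E n) (v : D n N) :
    T k y v = (v k).1 + ⟪y, (v k).2⟫ := rfl

lemma norm_T_le (k : Fin N) (y : E n) : ‖T (n := n) (N := N) k y‖ ≤ 1 + ‖y‖ := by
  refine ContinuousLinearMap.opNorm_le_bound _ (by positivity) fun v => ?_
  have h1 : |(v k).1| ≤ ‖v k‖ := by
    simpa using norm_fst_le (v k)
  have h2 : |⟪y, (v k).2⟫| ≤ ‖y‖ * ‖(v k).2‖ := abs_real_inner_le_norm _ _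
  have h3 : ‖v k‖ ≤ ‖v‖ := norm_le_pi_norm v k
  have h4 : ‖(v k).2‖ ≤ ‖v k‖ := norm_snd_le (v k)
  have : ‖T k y v‖ ≤ |(v k).1| + |⟪y, (v k).2⟫| := by
    simpa [Real.norm_eq_abs] using abs_add_le ((v k).1) (⟪y, (v k).2⟫)
  have hy : 0 ≤ ‖y‖ := norm_nonneg y
  calc ‖T k y v‖ ≤ |(v k).1| + |⟪y, (v k).2⟫| := this
    _ ≤ ‖v‖ + ‖y‖ * ‖v‖ := by
        have : ‖y‖ * ‖(v k).2‖ ≤ ‖y‖ * ‖v‖ :=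
          mul_le_mul_of_nonneg_left (h4.trans h3) hy
        linarith
    _ = (1 + ‖y‖) * ‖v‖ := by ring

lemma continuous_T (k : Fin N) : Continuous fun y : E n => T (N := N) k y := by
  unfold T
  exact continuous_const.add
    ((Continuous.clm_comp (map_continuous (innerSL ℝ)) continuous_const))

/-- The pointwise derivative of `z ↦ log S p z y`. -/
noncomputable def L' (p : Fin (N+1) → ℝ) (z : D n N) (y : E n) : D n N →L[ℝ] ℝ :=
  ∑ k : Fin N, gibbsWeight p z k.succ y • T k y

lemma hasFDerivAt_logS (hp : ∀ l, 0 < p l) (z : D n N) (y : E n) :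
    HasFDerivAt (fun w => Real.log (S p w y)) (L' p z y) z := by
  have hT : ∀ (w : D n N) (k : Fin N), (w k).1 + ⟪(w k).2, y⟫ = T k y w := by
    intro w k; rw [T_apply, real_inner_comm]
  have hS' : HasFDerivAt (fun w => S p w y)
      (∑ k : Fin N, (p k.succ * Real.exp (T k y z)) • T k y) z := by
    have : (fun w => S p w y)
        = fun w => p 0 + ∑ k : Fin N, p k.succ * Real.exp (T k y w) := by
      funext w
      rw [S_eq]
      exact congrArg _ (Finset.sum_congr rfl fun k _ => by rw [hT w k])
    rw [this]
    refine HasFDerivAt.const_add (p 0) ?_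
    refine HasFDerivAt.fun_sum fun k _ => ?_
    have h1 : HasFDerivAt (fun w => Real.exp (T k y w))
        (Real.exp (T k y z) • T k y) z :=
      (Real.hasDerivAt_exp (T k y z)).comp_hasFDerivAt z (T k y).hasFDerivAt
    have h2 := h1.const_mul (p k.succ)
    simpa [smul_smul, mul_comm] using h2
  have hlog := hS'.log (S_pos hp z y).ne'
  have : (S p z y)⁻¹ • ∑ k : Fin N, (p k.succ * Real.exp (T k y z)) • T k y
      = L' p z y := by
    rw [Finset.smul_sum]
    refine Finset.sum_congr rfl fun k _ => ?_
    rw [smul_smul]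
    congr 1
    rw [gibbs_eq]
    rw [extPair_succ, hT z k]
    field_simp
  rwa [this] at hlog

lemma norm_L'_le (hp : ∀ l, 0 < p l) (z : D n N) (y : E n) :
    ‖L' p z y‖ ≤ 1 + ‖y‖ := by
  calc ‖L' p z y‖ ≤ ∑ k : Fin N, ‖gibbsWeight p z k.succ y • T k y‖ :=
        norm_sum_le _ _
    _ ≤ ∑ k : Fin N, gibbsWeight p z k.succ y * (1 + ‖y‖) := by
        refine Finset.sum_le_sum fun k _ => ?_
        have hg := gibbs_nonneg hp z k.succ y
        have hTn := norm_T_le (n := n) k y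
        have hT0 : (0:ℝ) ≤ ‖T (n := n) k y‖ := norm_nonneg _
        calc ‖gibbsWeight p z k.succ y • T k y‖
            ≤ ‖gibbsWeight p z k.succ y‖ * ‖T k y‖ :=
              ContinuousLinearMap.opNorm_smul_le _ _
          _ = gibbsWeight p z k.succ y * ‖T k y‖ := by
              rw [Real.norm_eq_abs, abs_of_nonneg hg]
          _ ≤ gibbsWeight p z k.succ y * (1 + ‖y‖) :=
              mul_le_mul_of_nonneg_left hTn hg
    _ = (∑ k : Fin N, gibbsWeight p z k.succ y) * (1 + ‖y‖) := by
        rw [Finset.sum_mul]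
    _ ≤ 1 * (1 + ‖y‖) := by
        refine mul_le_mul_of_nonneg_right (gibbs_succ_sum_le_one hp z y) (by positivity)
    _ = 1 + ‖y‖ := one_mul _

lemma continuous_L' (hp : ∀ l, 0 < p l) (z : D n N) :
    Continuous fun y : E n => L' p z y := by
  unfold L'
  exact continuous_finset_sum _ fun k _ =>
    (continuous_gibbs hp z k.succ).smul (continuous_T k)

lemma integrable_L' (hp : ∀ l, 0 < p l) (z : D n N)
    (μ : Measure (E n)) [IsProbabilityMeasure μ]
    (hmom : Integrable (fun x : E n => ‖x‖) μ) :
    Integrable (fun y => L' p z y) μ := by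
  refine Integrable.mono' ((integrable_const (1:ℝ)).add hmom)
    (continuous_L' hp z).aestronglyMeasurable ?_
  filter_upwards with y
  exact norm_L'_le hp z y

lemma hasFDerivAt_G (hp : ∀ l, 0 < p l)
    (μ : Measure (E n)) [IsProbabilityMeasure μ]
    (hmom : Integrable (fun x : E n => ‖x‖) μ) (z : D n N) :
    HasFDerivAt (fun w => ∫ y, Real.log (S p w y) ∂μ) (∫ y, L' p z y ∂μ) z := by
  refine hasFDerivAt_integral_of_dominated_of_fderiv_le (F' := fun w y => L' p w y)
    (bound := fun y => 1 + ‖y‖) (s := Set.univ) Filter.univ_mem ?_ ?_ ?_ ?_ ?_ ?_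
  · filter_upwards with w
    exact ((continuous_S w).log fun y => (S_pos hp w y).ne').aestronglyMeasurable
  · exact integrable_logS hp z μ hmom
  · exact (continuous_L' hp z).aestronglyMeasurable
  · filter_upwards with y
    intro w _
    exact norm_L'_le hp w y
  · exact (integrable_const (1:ℝ)).add hmom
  · filter_upwards with y
    intro w _
    exact hasFDerivAt_logS hp w y

noncomputable def Tfst (k : Fin N) : D n N →L[ℝ] ℝ :=
  (ContinuousLinearMap.fst ℝ ℝ (E n)).comp (ContinuousLinearMap.proj k)

noncomputable def Tsnd (k : Fin N) (y : E n) : D n N →L[ℝ] ℝ :=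
  (innerSL ℝ y).comp ((ContinuousLinearMap.snd ℝ ℝ (E n)).comp (ContinuousLinearMap.proj k))

@[simp] lemma Tfst_apply (k : Fin N) (v : D n N) : Tfst k v = (v k).1 := rfl
@[simp] lemma Tsnd_apply (k : Fin N) (y : E n) (v : D n N) :
    Tsnd k y v = ⟪y, (v k).2⟫ := rfl

/-- The quadratic penalty. -/
noncomputable def Q (z : D n N) : ℝ :=
  ∑ k : Fin N, ((z k).1 ^ 2 + ⟪(z k).2, (z k).2⟫)

/-- Derivative of the quadratic penalty. -/
noncomputable def DQ (z : D n N) : D n N →L[ℝ] ℝ :=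
  ∑ k : Fin N, ((2 * (z k).1) • Tfst k + (2:ℝ) • Tsnd k ((z k).2))

lemma DQ_apply (z v : D n N) :
    DQ z v = ∑ k : Fin N, (2 * (z k).1 * (v k).1 + 2 * ⟪(z k).2, (v k).2⟫) := by
  rw [DQ, ContinuousLinearMap.sum_apply]
  refine Finset.sum_congr rfl fun k _ => ?_
  simp [smul_eq_mul]

lemma Q_nonneg (z : D n N) : 0 ≤ Q z :=
  Finset.sum_nonneg fun k _ => add_nonneg (sq_nonneg _) (real_inner_self_nonneg)

lemma norm_sq_le_Q (z : D n N) : ‖z‖ ^ 2 ≤ Q z := by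
  have h : ∀ k : Fin N, ‖z k‖ ^ 2 ≤ Q z := by
    intro k
    have h1 : ‖z k‖ ^ 2 ≤ (z k).1 ^ 2 + ⟪(z k).2, (z k).2⟫ := by
      rw [real_inner_self_eq_norm_sq]
      rcases max_cases ‖(z k).1‖ ‖(z k).2‖ with ⟨he, _⟩ | ⟨he, _⟩
      · have : ‖z k‖ = ‖(z k).1‖ := by rw [Prod.norm_def, he]
        rw [this, Real.norm_eq_abs, sq_abs]
        nlinarith [sq_nonneg ‖(z k).2‖]
      · have : ‖z k‖ = ‖(z k).2‖ := by rw [Prod.norm_def, he]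
        rw [this]
        nlinarith [sq_nonneg ((z k).1)]
    refine h1.trans ?_
    exact Finset.single_le_sum
      (f := fun k => (z k).1 ^ 2 + ⟪(z k).2, (z k).2⟫)
      (fun l _ => add_nonneg (sq_nonneg _) real_inner_self_nonneg) (Finset.mem_univ k)
  have hQ := Q_nonneg z
  have hz : ‖z‖ ≤ Real.sqrt (Q z) := by
    refine (pi_norm_le_iff_of_nonneg (Real.sqrt_nonneg _)).2 fun k => ?_
    rw [← Real.sqrt_sq (norm_nonneg (z k))]
    exact Real.sqrt_le_sqrt (h k)
  calc ‖z‖ ^ 2 ≤ Real.sqrt (Q z) ^ 2 := pow_le_pow_left₀ (norm_nonneg z) hz 2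
    _ = Q z := Real.sq_sqrt hQ

lemma hasFDerivAt_Q (z : D n N) : HasFDerivAt Q (DQ z) z := by
  have h : ∀ k : Fin N, HasFDerivAt (fun w : D n N => (w k).1 ^ 2 + ⟪(w k).2, (w k).2⟫)
      ((2 * (z k).1) • Tfst k + (2:ℝ) • Tsnd k ((z k).2)) z := by
    intro k
    have h1 : HasFDerivAt (fun w : D n N => (w k).1 ^ 2)
        ((2 * (z k).1) • Tfst k) z := by
      have := (hasDerivAt_pow 2 ((z k).1)).comp_hasFDerivAt z (Tfst k).hasFDerivAt
      rw [show ((2:ℕ):ℝ) * (z k).1 ^ (2-1) = 2 * (z k).1 by norm_num] at this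
      exact this
    have h2 : HasFDerivAt (fun w : D n N => ⟪(w k).2, (w k).2⟫)
        ((2:ℝ) • Tsnd k ((z k).2)) z := by
      have hsnd : HasFDerivAt (fun w : D n N => (w k).2)
          ((ContinuousLinearMap.snd ℝ ℝ (E n)).comp (ContinuousLinearMap.proj k)) z := by
        have h0 := (((ContinuousLinearMap.snd ℝ ℝ (E n)).comp
          (ContinuousLinearMap.proj (R := ℝ) (φ := fun _ : Fin N => ℝ × E n) k))).hasFDerivAt
          (x := z)
        exact h0.congr_of_eventuallyEq (by filter_upwards with w; rfl)
      have := hsnd.inner ℝ hsnd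
      refine this.congr_fderiv ?_
      refine ContinuousLinearMap.ext fun v => ?_
      simp only [ContinuousLinearMap.smul_apply, Tsnd_apply, ContinuousLinearMap.comp_apply,
        fderivInnerCLM_apply, ContinuousLinearMap.prod_apply, ContinuousLinearMap.proj_apply,
        ContinuousLinearMap.coe_snd', smul_eq_mul]
      rw [real_inner_comm ((v k).2) ((z k).2)]
      ring
    exact h1.add h2
  have := HasFDerivAt.fun_sum (fun k (_ : k ∈ Finset.univ) => h k)
  exact this

/-- The linear part of the functional. -/
noncomputable def Lin (p : Fin (N+1) → ℝ) (x : Fin (N+1) → E n) : D n N →L[ℝ] ℝ :=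
  ∑ k : Fin N, p k.succ • T k (x k.succ)

lemma Lin_apply (p : Fin (N+1) → ℝ) (x : Fin (N+1) → E n) (v : D n N) :
    Lin p x v = ∑ k : Fin N, p k.succ * ((v k).1 + ⟪x k.succ, (v k).2⟫) := by
  rw [Lin, ContinuousLinearMap.sum_apply]
  refine Finset.sum_congr rfl fun k _ => ?_
  simp [smul_eq_mul]

/-- The variational functional. -/
noncomputable def Phi (μ : Measure (E n)) (p : Fin (N+1) → ℝ) (x : Fin (N+1) → E n)
    (z : D n N) : ℝ :=
  (∫ y, Real.log (S p z y) ∂μ) - ∑ k : Fin N, p k.succ * ((z k).1 + ⟪x k.succ, (z k).2⟫)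

lemma hasFDerivAt_Phi (hp : ∀ l, 0 < p l)
    (μ : Measure (E n)) [IsProbabilityMeasure μ]
    (hmom : Integrable (fun x : E n => ‖x‖) μ) (x : Fin (N+1) → E n) (z : D n N) :
    HasFDerivAt (Phi μ p x) ((∫ y, L' p z y ∂μ) - Lin p x) z := by
  have h := (hasFDerivAt_G hp μ hmom z).sub ((Lin p x).hasFDerivAt)
  refine h.congr_of_eventuallyEq ?_
  filter_upwards with w
  rw [Phi, Pi.sub_apply, Lin_apply]

lemma integrable_gibbs (hp : ∀ l, 0 < p l) (z : D n N) (k : Fin (N+1))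
    (μ : Measure (E n)) [IsProbabilityMeasure μ] :
    Integrable (fun y => gibbsWeight p z k y) μ := by
  refine Integrable.mono' (integrable_const (1:ℝ))
    (continuous_gibbs hp z k).aestronglyMeasurable ?_
  filter_upwards with y
  rw [Real.norm_eq_abs, abs_of_nonneg (gibbs_nonneg hp z k y)]
  exact gibbs_le_one hp z k y

lemma integrable_gibbs_smul (hp : ∀ l, 0 < p l) (z : D n N) (k : Fin (N+1))
    (μ : Measure (E n)) [IsProbabilityMeasure μ]
    (hmom : Integrable (fun x : E n => ‖x‖) μ) :
    Integrable (fun y => gibbsWeight p z k y • y) μ := by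
  refine Integrable.mono' hmom
    (((continuous_gibbs hp z k).smul continuous_id).aestronglyMeasurable) ?_
  filter_upwards with y
  rw [norm_smul, Real.norm_eq_abs, abs_of_nonneg (gibbs_nonneg hp z k y)]
  calc gibbsWeight p z k y * ‖y‖ ≤ 1 * ‖y‖ :=
        mul_le_mul_of_nonneg_right (gibbs_le_one hp z k y) (norm_nonneg y)
    _ = ‖y‖ := one_mul _

lemma integral_L'_apply (hp : ∀ l, 0 < p l) (z : D n N)
    (μ : Measure (E n)) [IsProbabilityMeasure μ]
    (hmom : Integrable (fun x : E n => ‖x‖) μ) (v : D n N) :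
    (∫ y, L' p z y ∂μ) v
      = ∑ k : Fin N, ((∫ y, gibbsWeight p z k.succ y ∂μ) * (v k).1 +
          ⟪∫ y, gibbsWeight p z k.succ y • y ∂μ, (v k).2⟫) := by
  rw [ContinuousLinearMap.integral_apply (integrable_L' hp z μ hmom) v]
  have h1 : ∀ y : E n, L' p z y v
      = ∑ k : Fin N, (gibbsWeight p z k.succ y * (v k).1 +
          gibbsWeight p z k.succ y * ⟪y, (v k).2⟫) := by
    intro y
    rw [L', ContinuousLinearMap.sum_apply]
    refine Finset.sum_congr rfl fun k _ => ?_
    simp [T_apply, smul_eq_mul, mul_add]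
  have hint1 : ∀ k : Fin N, Integrable (fun y => gibbsWeight p z k.succ y * (v k).1) μ :=
    fun k => (integrable_gibbs hp z k.succ μ).mul_const _
  have hint2 : ∀ k : Fin N,
      Integrable (fun y => gibbsWeight p z k.succ y * ⟪y, (v k).2⟫) μ := by
    intro k
    have hc : Continuous fun y : E n => gibbsWeight p z k.succ y * ⟪y, (v k).2⟫ :=
      (continuous_gibbs hp z k.succ).mul (continuous_id.inner continuous_const)
    refine Integrable.mono' (hmom.const_mul ‖(v k).2‖) hc.aestronglyMeasurable ?_
    filter_upwards with y
    rw [Real.norm_eq_abs, abs_mul, abs_of_nonneg (gibbs_nonneg hp z k.succ y)]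
    calc gibbsWeight p z k.succ y * |⟪y, (v k).2⟫| ≤ 1 * |⟪y, (v k).2⟫| :=
          mul_le_mul_of_nonneg_right (gibbs_le_one hp z k.succ y) (abs_nonneg _)
      _ = |⟪y, (v k).2⟫| := one_mul _
      _ ≤ ‖y‖ * ‖(v k).2‖ := by
          simpa using abs_real_inner_le_norm y ((v k).2)
      _ = ‖(v k).2‖ * ‖y‖ := mul_comm _ _
  calc ∫ y, L' p z y v ∂μ
      = ∫ y, ∑ k : Fin N, (gibbsWeight p z k.succ y * (v k).1 +
          gibbsWeight p z k.succ y * ⟪y, (v k).2⟫) ∂μ := by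
        exact integral_congr_ae (Filter.Eventually.of_forall h1)
    _ = ∑ k : Fin N, ∫ y, (gibbsWeight p z k.succ y * (v k).1 +
          gibbsWeight p z k.succ y * ⟪y, (v k).2⟫) ∂μ :=
        integral_finset_sum _ fun k _ => (hint1 k).add (hint2 k)
    _ = ∑ k : Fin N, ((∫ y, gibbsWeight p z k.succ y ∂μ) * (v k).1 +
          ⟪∫ y, gibbsWeight p z k.succ y • y ∂μ, (v k).2⟫) := by
        refine Finset.sum_congr rfl fun k _ => ?_
        rw [integral_add (hint1 k) (hint2 k), integral_mul_const]
        congr 1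
        have h2 : ∀ y : E n, gibbsWeight p z k.succ y * ⟪y, (v k).2⟫
            = (innerSL ℝ ((v k).2)) (gibbsWeight p z k.succ y • y) := by
          intro y
          rw [innerSL_apply_apply, inner_smul_right, real_inner_comm]
        rw [integral_congr_ae (Filter.Eventually.of_forall h2)]
        rw [ContinuousLinearMap.integral_comp_comm _ (integrable_gibbs_smul hp z k.succ μ hmom)]
        rw [innerSL_apply_apply, real_inner_comm]

lemma sum_single {β : Type*} [AddCommMonoid β] (k : Fin N) (a : ℝ × E n)
    (G : (j : Fin N) → ℝ × E n → β) (hG : ∀ j, G j 0 = 0) :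
    ∑ j : Fin N, G j ((Pi.single k a : D n N) j) = G k a := by
  classical
  refine (Finset.sum_eq_single_of_mem k (Finset.mem_univ k) (fun j _ hj => ?_)).trans ?_
  · rw [Pi.single_eq_of_ne hj, hG j]
  · rw [Pi.single_eq_same]

/-- Lower bound for the variational functional. -/
lemma Phi_ge (hp : ∀ l, 0 < p l) (μ₁ μ₂ : Measure (E n))
    [IsProbabilityMeasure μ₁] [IsProbabilityMeasure μ₂]
    (hmom₁ : Integrable (fun y : E n => ‖y‖) μ₁)
    (hmom₂ : Integrable (fun y : E n => ‖y‖) μ₂)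
    (hconv : ∀ f : E n → ℝ, ConvexOn ℝ Set.univ f → Integrable f μ₂ →
      Integrable f μ₁ ∧ (∫ y, f y ∂μ₁) ≤ ∫ y, f y ∂μ₂)
    (U : Fin (N + 1) → Set (E n))
    (hUmeas : ∀ k, MeasurableSet (U k))
    (hUdisj : Pairwise (Function.onFun Disjoint U))
    (hUfull : μ₁ (⋃ k, U k) = 1)
    (hpdef : ∀ k, p k = (μ₁ (U k)).toReal)
    (x : Fin (N+1) → E n)
    (hxdef : ∀ k, x k = (p k)⁻¹ • ∫ y in U k, y ∂μ₁)
    (z : D n N) :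
    ∑ l : Fin (N+1), p l * Real.log (p l) ≤ Phi μ₂ p x z := by
  set g := fun y : E n => Real.log (S p z y) with hg
  have hμUk : ∀ l, μ₁ (U l) ≠ 0 := by
    intro l h0
    have h1 := hp l
    rw [hpdef l, h0] at h1
    simp at h1
  obtain ⟨hgi1, hgle⟩ := hconv g (convexOn_logS hp z) (integrable_logS hp z μ₂ hmom₂)
  have hid1 : Integrable (fun y : E n => y) μ₁ :=
    (integrable_norm_iff continuous_id.aestronglyMeasurable).1 hmom₁
  have hcompl : μ₁ ((⋃ k, U k)ᶜ) = 0 := by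
    rw [measure_compl (MeasurableSet.iUnion hUmeas) (measure_ne_top _ _), measure_univ,
      hUfull, tsub_self]
  have haemem : ∀ᵐ y ∂μ₁, y ∈ ⋃ k, U k := by
    rw [MeasureTheory.ae_iff]
    exact hcompl
  have hres : μ₁.restrict (⋃ k, U k) = μ₁ := Measure.restrict_eq_self_of_ae_mem haemem
  have hsplit : ∫ y, g y ∂μ₁ = ∑ l : Fin (N+1), ∫ y in U l, g y ∂μ₁ := by
    conv_lhs => rw [← hres]
    exact integral_iUnion_fintype hUmeas hUdisj (fun l => hgi1.integrableOn)
  have hjen : ∀ l, p l * g (x l) ≤ ∫ y in U l, g y ∂μ₁ := by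
    intro l
    have hν : (μ₁.restrict (U l)) Set.univ = μ₁ (U l) := Measure.restrict_apply_univ _
    haveI : NeZero (μ₁.restrict (U l)) := by
      refine ⟨?_⟩
      intro h0
      exact hμUk l (by rw [← hν, h0]; simp)
    have havg := (convexOn_logS hp z).map_average_le
      (f := fun y : E n => y) (μ := μ₁.restrict (U l))
      (((continuous_S z).log fun y => (S_pos hp z y).ne').continuousOn)
      isClosed_univ (Filter.Eventually.of_forall fun _ => Set.mem_univ _)
      (hid1.restrict) (hgi1.restrict (s := U l))
    have havg1 : (⨍ y, y ∂(μ₁.restrict (U l))) = x l := by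
      rw [average_eq, measureReal_restrict_apply_univ, measureReal_def, ← hpdef l, hxdef l]
    have havg2 : (⨍ y, g y ∂(μ₁.restrict (U l))) = (p l)⁻¹ * ∫ y in U l, g y ∂μ₁ := by
      rw [average_eq, measureReal_restrict_apply_univ, measureReal_def, ← hpdef l, smul_eq_mul]
    rw [havg1, havg2] at havg
    have h2 := mul_le_mul_of_nonneg_left havg (hp l).le
    rwa [← mul_assoc, mul_inv_cancel₀ (hp l).ne', one_mul] at h2
  have hgx : ∀ l, Real.log (p l) + ((extPair z l).1 + ⟪(extPair z l).2, x l⟫) ≤ g (x l) := by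
    intro l
    have hsingle : p l * Real.exp ((extPair z l).1 + ⟪(extPair z l).2, x l⟫) ≤ S p z (x l) :=
      Finset.single_le_sum
        (f := fun j => p j * Real.exp ((extPair z j).1 + ⟪(extPair z j).2, x l⟫))
        (fun j _ => mul_nonneg (hp j).le (Real.exp_pos _).le) (Finset.mem_univ l)
    have h2 := Real.log_le_log (mul_pos (hp l) (Real.exp_pos _)) hsingle
    rwa [Real.log_mul (hp l).ne' (Real.exp_pos _).ne', Real.log_exp] at h2
  set A := ∑ l : Fin (N+1), p l * (Real.log (p l) + ((extPair z l).1 + ⟪(extPair z l).2, x l⟫))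
    with hA_def
  have hA : A = (∑ l : Fin (N+1), p l * Real.log (p l)) +
      ∑ k : Fin N, p k.succ * ((z k).1 + ⟪x k.succ, (z k).2⟫) := by
    rw [hA_def]
    have : ∀ l : Fin (N+1), p l * (Real.log (p l) + ((extPair z l).1 + ⟪(extPair z l).2, x l⟫))
        = p l * Real.log (p l) + p l * ((extPair z l).1 + ⟪(extPair z l).2, x l⟫) := by
      intro l; ring
    rw [Finset.sum_congr rfl fun l _ => this l, Finset.sum_add_distrib]
    congr 1
    rw [Fin.sum_univ_succ]
    simp only [extPair_zero, extPair_succ]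
    have h0 : p 0 * ((0:ℝ) + ⟪(0 : E n), x 0⟫) = 0 := by simp
    rw [h0, zero_add]
    exact Finset.sum_congr rfl fun k _ => by rw [real_inner_comm]
  have hsum1 : A ≤ ∑ l : Fin (N+1), p l * g (x l) := by
    rw [hA_def]
    exact Finset.sum_le_sum fun l _ => mul_le_mul_of_nonneg_left (hgx l) (hp l).le
  have hsum2 : ∑ l : Fin (N+1), p l * g (x l) ≤ ∫ y, g y ∂μ₁ := by
    rw [hsplit]
    exact Finset.sum_le_sum fun l _ => hjen l
  rw [Phi]
  have : A - ∑ k : Fin N, p k.succ * ((z k).1 + ⟪x k.succ, (z k).2⟫)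
      = ∑ l : Fin (N+1), p l * Real.log (p l) := by rw [hA]; ring
  linarith [hgle]

end MainLemmaAux


open MainLemmaAux

/-- Main Lemma, finite version. Under convex order, zero barycenter of `μ₁`
and the no-hyperplane-concentration condition on `μ₂`, the target point
`((p₁, p₁x₁), …, (p_N, p_N x_N))` lies in the closure of the range of the map `F`. -/
theorem mainLemma_finite_version (n N : ℕ)
    (μ₁ μ₂ : Measure (EuclideanSpace ℝ (Fin n)))
    [IsProbabilityMeasure μ₁] [IsProbabilityMeasure μ₂]
    (hmom₁ : Integrable (fun x => ‖x‖) μ₁)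
    (hmom₂ : Integrable (fun x => ‖x‖) μ₂)
    (hconv : ∀ f : EuclideanSpace ℝ (Fin n) → ℝ, ConvexOn ℝ Set.univ f → Integrable f μ₂ →
      Integrable f μ₁ ∧ (∫ x, f x ∂μ₁) ≤ ∫ x, f x ∂μ₂)
    (hbary : (∫ x, x ∂μ₁) = 0)
    (hplane : ∀ w : EuclideanSpace ℝ (Fin n), w ≠ 0 → ∀ c : ℝ,
      μ₂ {y | ⟪w, y⟫ = c} < 1)
    (U : Fin (N + 1) → Set (EuclideanSpace ℝ (Fin n)))
    (hUmeas : ∀ k, MeasurableSet (U k))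
    (hUdisj : Pairwise (Function.onFun Disjoint U))
    (hUfull : μ₁ (⋃ k, U k) = 1)
    (p : Fin (N + 1) → ℝ) (hpdef : ∀ k, p k = (μ₁ (U k)).toReal)
    (hppos : ∀ k, 0 < p k)
    (x : Fin (N + 1) → EuclideanSpace ℝ (Fin n))
    (hxdef : ∀ k, x k = (p k)⁻¹ • ∫ z in U k, z ∂μ₁)
    (F : (Fin N → ℝ × EuclideanSpace ℝ (Fin n)) →
      (Fin N → ℝ × EuclideanSpace ℝ (Fin n)))
    (hF : ∀ ab k, F ab k =
      (∫ y, gibbsWeight p ab k.succ y ∂μ₂,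
       ∫ y, gibbsWeight p ab k.succ y • y ∂μ₂)) :
    (fun k : Fin N => (p k.succ, p k.succ • x k.succ)) ∈ closure (Set.range F) := by
  classical
  rw [Metric.mem_closure_iff]
  intro δ hδ
  set C := ∑ l : Fin (N+1), p l * Real.log (p l) with hC
  have hlb : ∀ z : D n N, C ≤ Phi μ₂ p x z := fun z =>
    Phi_ge hppos μ₁ μ₂ hmom₁ hmom₂ hconv U hUmeas hUdisj hUfull hpdef x hxdef z
  set M := Phi μ₂ p x 0 - C with hM
  have hM0 : 0 ≤ M := by have := hlb 0; simp only [hM]; linarith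
  set K := M + 1 with hK_def
  have hK : 0 < K := by simp only [hK_def]; linarith
  set ε := min 1 (δ^2 / (16 * K)) with hε_def
  have hε0 : 0 < ε := lt_min one_pos (by positivity)
  have hεK : ε * K ≤ δ^2/16 := by
    have h1 : ε ≤ δ^2/(16*K) := min_le_right _ _
    calc ε * K ≤ (δ^2/(16*K)) * K := mul_le_mul_of_nonneg_right h1 hK.le
      _ = δ^2/16 := by field_simp
  set f := fun z : D n N => Phi μ₂ p x z + ε * Q z with hf_def
  clear_value C M K ε f
  have hfderiv : ∀ z : D n N,
      HasFDerivAt f (((∫ y, L' p z y ∂μ₂) - Lin p x) + ε • DQ z) z :=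
    fun z => by
      rw [hf_def]
      exact (hasFDerivAt_Phi hppos μ₂ hmom₂ x z).add ((hasFDerivAt_Q z).const_mul ε)
  have hfc : Continuous f := by
    rw [continuous_iff_continuousAt]
    exact fun z => (hfderiv z).continuousAt
  haveI : ProperSpace (D n N) := FiniteDimensional.proper ℝ _
  have hcoer : Filter.Tendsto f (Filter.cocompact _) Filter.atTop := by
    have h2 : Filter.Tendsto (fun z : D n N => ‖z‖) (Filter.cocompact _) Filter.atTop :=
      tendsto_norm_cocompact_atTop
    have h3 : Filter.Tendsto (fun z : D n N => ‖z‖^2) (Filter.cocompact _) Filter.atTop := by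
      have := h2.atTop_mul_atTop₀ h2
      refine this.congr fun z => ?_
      rw [sq]
    have h4 := h3.const_mul_atTop hε0
    have h1 := Filter.tendsto_atTop_add_const_left _ C h4
    refine Filter.tendsto_atTop_mono ?_ h1
    intro z
    have ha := norm_sq_le_Q z
    have hb := hlb z
    have hc := mul_le_mul_of_nonneg_left ha hε0.le
    simp only [hf_def]
    linarith
  obtain ⟨z₀, hz₀⟩ := hfc.exists_forall_le hcoer
  have hloc : IsLocalMin f z₀ := Filter.Eventually.of_forall hz₀
  have hker : (((∫ y, L' p z₀ y ∂μ₂) - Lin p x) + ε • DQ z₀) = 0 :=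
    hloc.hasFDerivAt_eq_zero (hfderiv z₀)
  have hQ0 : Q (0 : D n N) = 0 := by
    simp [Q]
  have hQb : ε * Q z₀ ≤ M := by
    have h1 := hz₀ 0
    simp only [hf_def, hQ0, mul_zero, add_zero] at h1
    have h3 := hlb z₀
    simp only [hM]
    linarith
  -- component equations from the vanishing gradient
  have happ : ∀ v : D n N,
      (∑ j : Fin N, ((∫ y, gibbsWeight p z₀ j.succ y ∂μ₂) * (v j).1 +
          ⟪∫ y, gibbsWeight p z₀ j.succ y • y ∂μ₂, (v j).2⟫))
        - (∑ j : Fin N, p j.succ * ((v j).1 + ⟪x j.succ, (v j).2⟫))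
        + ε * (∑ j : Fin N, (2 * (z₀ j).1 * (v j).1 + 2 * ⟪(z₀ j).2, (v j).2⟫)) = 0 := by
    intro v
    have h1 := congrArg (fun L : D n N →L[ℝ] ℝ => L v) hker
    simp only [ContinuousLinearMap.add_apply, ContinuousLinearMap.coe_sub',
      Pi.sub_apply, ContinuousLinearMap.coe_smul', Pi.smul_apply,
      ContinuousLinearMap.zero_apply, smul_eq_mul] at h1
    rw [integral_L'_apply hppos z₀ μ₂ hmom₂ v, Lin_apply, DQ_apply] at h1
    exact h1
  have hcomp1 : ∀ k : Fin N,
      (∫ y, gibbsWeight p z₀ k.succ y ∂μ₂) = p k.succ - ε * (2 * (z₀ k).1) := by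
    intro k
    have h1 := happ (Pi.single k ((1:ℝ), (0 : EuclideanSpace ℝ (Fin n))))
    rw [sum_single k _ (fun j a => (∫ y, gibbsWeight p z₀ j.succ y ∂μ₂) * a.1 +
        ⟪∫ y, gibbsWeight p z₀ j.succ y • y ∂μ₂, a.2⟫) (fun j => by simp),
      sum_single k _ (fun j a => p j.succ * (a.1 + ⟪x j.succ, a.2⟫)) (fun j => by simp),
      sum_single k _ (fun j a => 2 * (z₀ j).1 * a.1 + 2 * ⟪(z₀ j).2, a.2⟫)
        (fun j => by simp)] at h1
    simp only [inner_zero_right, add_zero, mul_one, mul_zero] at h1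
    linarith
  have hcomp2 : ∀ k : Fin N,
      (∫ y, gibbsWeight p z₀ k.succ y • y ∂μ₂)
        = p k.succ • x k.succ - (ε * 2) • (z₀ k).2 := by
    intro k
    have hvec : (∫ y, gibbsWeight p z₀ k.succ y • y ∂μ₂)
        - p k.succ • x k.succ + (ε * 2) • (z₀ k).2 = 0 := by
      refine ext_inner_right ℝ fun u => ?_
      have h1 := happ (Pi.single k ((0:ℝ), u))
      rw [sum_single k _ (fun j a => (∫ y, gibbsWeight p z₀ j.succ y ∂μ₂) * a.1 +
          ⟪∫ y, gibbsWeight p z₀ j.succ y • y ∂μ₂, a.2⟫) (fun j => by simp),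
        sum_single k _ (fun j a => p j.succ * (a.1 + ⟪x j.succ, a.2⟫)) (fun j => by simp),
        sum_single k _ (fun j a => 2 * (z₀ j).1 * a.1 + 2 * ⟪(z₀ j).2, a.2⟫)
          (fun j => by simp)] at h1
      simp only [mul_zero, zero_add, add_zero] at h1
      rw [inner_add_left, inner_sub_left, inner_zero_left, real_inner_smul_left,
        real_inner_smul_left]
      linarith
    have h2 : ((∫ y, gibbsWeight p z₀ k.succ y • y ∂μ₂) + (ε * 2) • (z₀ k).2)
        - p k.succ • x k.succ = 0 := by rw [← hvec]; abel
    have h3 := sub_eq_zero.mp h2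
    exact eq_sub_of_add_eq h3
  -- the quadratic bounds
  have hQk : ∀ k : Fin N, (z₀ k).1 ^ 2 + ⟪(z₀ k).2, (z₀ k).2⟫ ≤ Q z₀ := by
    intro k
    exact Finset.single_le_sum
      (f := fun j => (z₀ j).1 ^ 2 + ⟪(z₀ j).2, (z₀ j).2⟫)
      (fun j _ => add_nonneg (sq_nonneg _) real_inner_self_nonneg) (Finset.mem_univ k)
  have hq1 : ∀ k : Fin N, (z₀ k).1 ^ 2 ≤ Q z₀ := by
    intro k
    have hzz : (0:ℝ) ≤ ⟪(z₀ k).2, (z₀ k).2⟫ := real_inner_self_nonneg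
    linarith [hQk k]
  have hq2 : ∀ k : Fin N, ‖(z₀ k).2‖ ^ 2 ≤ Q z₀ := by
    intro k
    have hzz : ⟪(z₀ k).2, (z₀ k).2⟫ = ‖(z₀ k).2‖ ^ 2 := real_inner_self_eq_norm_sq _
    nlinarith [hQk k, sq_nonneg ((z₀ k).1)]
  have hbound : ∀ w : ℝ, w ^ 2 ≤ Q z₀ → |ε * 2 * w| ≤ δ / 2 := by
    intro w hw
    have h1 : (ε * 2 * w) ^ 2 ≤ δ ^ 2 / 4 := by
      have h2 : ε * w ^ 2 ≤ ε * Q z₀ := mul_le_mul_of_nonneg_left hw hε0.le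
      have h3 : ε * Q z₀ ≤ M := hQb
      have h4 : ε * M ≤ ε * K := by
        refine mul_le_mul_of_nonneg_left ?_ hε0.le
        simp only [hK_def]; linarith
      have h5 : ε * (ε * w ^ 2) ≤ ε * M := by
        refine mul_le_mul_of_nonneg_left ?_ hε0.le
        linarith
      have h7 : ε * (ε * w ^ 2) ≤ δ ^ 2 / 16 := by linarith
      calc (ε * 2 * w) ^ 2 = 4 * (ε * (ε * w ^ 2)) := by ring
        _ ≤ 4 * (δ ^ 2 / 16) := by linarith
        _ = δ ^ 2 / 4 := by ring
    have h6 : |ε * 2 * w| = Real.sqrt ((ε * 2 * w) ^ 2) := (Real.sqrt_sq_eq_abs _).symm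
    rw [h6]
    calc Real.sqrt ((ε * 2 * w) ^ 2) ≤ Real.sqrt (δ ^ 2 / 4) := Real.sqrt_le_sqrt h1
      _ = δ / 2 := by
          rw [show δ ^ 2 / 4 = (δ / 2) ^ 2 by ring, Real.sqrt_sq (by linarith : (0:ℝ) ≤ δ / 2)]
  refine ⟨F z₀, Set.mem_range_self _, ?_⟩
  rw [dist_pi_lt_iff hδ]
  intro k
  rw [hF z₀ k, hcomp1 k, hcomp2 k, Prod.dist_eq]
  refine max_lt ?_ ?_
  · rw [Real.dist_eq]
    have h1 : p k.succ - (p k.succ - ε * (2 * (z₀ k).1)) = ε * 2 * (z₀ k).1 := by ring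
    rw [h1]
    have := hbound ((z₀ k).1) (hq1 k)
    linarith
  · rw [dist_eq_norm]
    have h1 : p k.succ • x k.succ - (p k.succ • x k.succ - (ε * 2) • (z₀ k).2)
        = (ε * 2) • (z₀ k).2 := by abel
    rw [h1, norm_smul, Real.norm_eq_abs]
    have h2 : |ε * 2 * ‖(z₀ k).2‖| = |ε * 2| * ‖(z₀ k).2‖ := by
      rw [abs_mul, abs_of_nonneg (norm_nonneg ((z₀ k).2))]
    rw [← h2]
    have := hbound ‖(z₀ k).2‖ (hq2 k)
    linarith
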